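/- Let u : ℝ² → ℝ be a smooth (C^∞) function of (x,t) satisfying the mKdV equation u_t = u_xxx − 6 u² u_x. Define ν¹ := u_x − u² and ν² := u_t − 2u(u_xx − 2u u_x) − 2u²(u_x − u²). Then the pair (ν¹, ν²) satisfies the system ν¹_t = ν²_x + 2 ν¹ ν¹_x and ν² = ν¹_xx + 2 (ν¹)². -/

import Mathlib

/-- Partial derivative in the first variable `x`. -/
noncomputable def px (f : ℝ → ℝ → ℝ) : ℝ → ℝ → ℝ := fun x t => deriv (fun y => f y t) x

/-- Partial derivative in the second variable `t`. -/
noncomputable def pt (f : ℝ → ℝ → ℝ) : ℝ → ℝ → ℝ := fun x t => deriv (fun s => f x s) t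

section helpers

variable {f : ℝ → ℝ → ℝ}

lemma hasDerivX (hf : ContDiff ℝ (⊤ : ℕ∞) (Function.uncurry f)) (x t : ℝ) :
    HasDerivAt (fun y => f y t) (px f x t) x := by
  have hg : HasDerivAt (fun y : ℝ => (y, t)) ((1 : ℝ), (0 : ℝ)) x :=
    (hasDerivAt_id x).prodMk (hasDerivAt_const x t)
  have hF : HasFDerivAt (Function.uncurry f)
      (fderiv ℝ (Function.uncurry f) (x, t)) (x, t) :=
    (hf.differentiable (by simp) (x, t)).hasFDerivAt
  have h := hF.comp_hasDerivAt x hg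
  have hd : DifferentiableAt ℝ (fun y => f y t) x := h.differentiableAt
  exact hd.hasDerivAt

lemma hasDerivT (hf : ContDiff ℝ (⊤ : ℕ∞) (Function.uncurry f)) (x t : ℝ) :
    HasDerivAt (fun s => f x s) (pt f x t) t := by
  have hg : HasDerivAt (fun s : ℝ => (x, s)) ((0 : ℝ), (1 : ℝ)) t :=
    (hasDerivAt_const t x).prodMk (hasDerivAt_id t)
  have hF : HasFDerivAt (Function.uncurry f)
      (fderiv ℝ (Function.uncurry f) (x, t)) (x, t) :=
    (hf.differentiable (by simp) (x, t)).hasFDerivAt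
  have h := hF.comp_hasDerivAt t hg
  have hd : DifferentiableAt ℝ (fun s => f x s) t := h.differentiableAt
  exact hd.hasDerivAt

lemma px_eq (hf : ContDiff ℝ (⊤ : ℕ∞) (Function.uncurry f)) (x t : ℝ) :
    px f x t = fderiv ℝ (Function.uncurry f) (x, t) (1, 0) := by
  have hg : HasDerivAt (fun y : ℝ => (y, t)) ((1 : ℝ), (0 : ℝ)) x :=
    (hasDerivAt_id x).prodMk (hasDerivAt_const x t)
  have hF : HasFDerivAt (Function.uncurry f)
      (fderiv ℝ (Function.uncurry f) (x, t)) (x, t) :=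
    (hf.differentiable (by simp) (x, t)).hasFDerivAt
  have h := hF.comp_hasDerivAt x hg
  exact h.deriv.symm ▸ rfl

lemma pt_eq (hf : ContDiff ℝ (⊤ : ℕ∞) (Function.uncurry f)) (x t : ℝ) :
    pt f x t = fderiv ℝ (Function.uncurry f) (x, t) (0, 1) := by
  have hg : HasDerivAt (fun s : ℝ => (x, s)) ((0 : ℝ), (1 : ℝ)) t :=
    (hasDerivAt_const t x).prodMk (hasDerivAt_id t)
  have hF : HasFDerivAt (Function.uncurry f)
      (fderiv ℝ (Function.uncurry f) (x, t)) (x, t) :=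
    (hf.differentiable (by simp) (x, t)).hasFDerivAt
  have h := hF.comp_hasDerivAt t hg
  exact h.deriv.symm ▸ rfl

lemma contDiff_px (hf : ContDiff ℝ (⊤ : ℕ∞) (Function.uncurry f)) :
    ContDiff ℝ (⊤ : ℕ∞) (Function.uncurry (px f)) := by
  have h : Function.uncurry (px f)
      = fun p : ℝ × ℝ => fderiv ℝ (Function.uncurry f) p (1, 0) := by
    funext p
    exact px_eq hf p.1 p.2
  rw [h]
  exact (hf.fderiv_right (by exact_mod_cast le_top)).clm_apply contDiff_const

lemma contDiff_pt (hf : ContDiff ℝ (⊤ : ℕ∞) (Function.uncurry f)) :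
    ContDiff ℝ (⊤ : ℕ∞) (Function.uncurry (pt f)) := by
  have h : Function.uncurry (pt f)
      = fun p : ℝ × ℝ => fderiv ℝ (Function.uncurry f) p (0, 1) := by
    funext p
    exact pt_eq hf p.1 p.2
  rw [h]
  exact (hf.fderiv_right (by exact_mod_cast le_top)).clm_apply contDiff_const

lemma clairaut (hf : ContDiff ℝ (⊤ : ℕ∞) (Function.uncurry f)) (x t : ℝ) :
    pt (px f) x t = px (pt f) x t := by
  set F := Function.uncurry f with hF
  have hF1 : ∀ p, HasFDerivAt F (fderiv ℝ F p) p := fun p =>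
    (hf.differentiable (by simp) p).hasFDerivAt
  have hF2 : DifferentiableAt ℝ (fderiv ℝ F) (x, t) :=
    ((hf.fderiv_right (m := (⊤ : ℕ∞)) (by exact_mod_cast le_top)).differentiable (by simp)) (x, t)
  have hsymm := second_derivative_symmetric hF1 hF2.hasFDerivAt
    ((0 : ℝ), (1 : ℝ)) ((1 : ℝ), (0 : ℝ))
  have e1 : pt (px f) x t = fderiv ℝ (fderiv ℝ F) (x, t) (0, 1) (1, 0) := by
    have h : (fun s => px f x s) = fun s => fderiv ℝ F (x, s) (1, 0) :=
      funext fun s => px_eq hf x s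
    have hg : HasDerivAt (fun s : ℝ => (x, s)) ((0 : ℝ), (1 : ℝ)) t :=
      (hasDerivAt_const t x).prodMk (hasDerivAt_id t)
    have hc : HasDerivAt (fun s : ℝ => fderiv ℝ F (x, s))
        (fderiv ℝ (fderiv ℝ F) (x, t) (0, 1)) t :=
      hF2.hasFDerivAt.comp_hasDerivAt t hg
    have h2 := hc.clm_apply (hasDerivAt_const t ((1 : ℝ), (0 : ℝ)))
    have h3 : pt (px f) x t = deriv (fun s => px f x s) t := rfl
    rw [h3, h]
    simpa using h2.deriv
  have e2 : px (pt f) x t = fderiv ℝ (fderiv ℝ F) (x, t) (1, 0) (0, 1) := by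
    have h : (fun y => pt f y t) = fun y => fderiv ℝ F (y, t) (0, 1) :=
      funext fun y => pt_eq hf y t
    have hg : HasDerivAt (fun y : ℝ => (y, t)) ((1 : ℝ), (0 : ℝ)) x :=
      (hasDerivAt_id x).prodMk (hasDerivAt_const x t)
    have hc : HasDerivAt (fun y : ℝ => fderiv ℝ F (y, t))
        (fderiv ℝ (fderiv ℝ F) (x, t) (1, 0)) x :=
      hF2.hasFDerivAt.comp_hasDerivAt x hg
    have h2 := hc.clm_apply (hasDerivAt_const x ((0 : ℝ), (1 : ℝ)))
    have h3 : px (pt f) x t = deriv (fun y => pt f y t) x := rfl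
    rw [h3, h]
    simpa using h2.deriv
  rw [e1, e2, hsymm]

end helpers

/-- for a solution of mKdV `u_t = u_xxx − 6u²u_x`, the invariants
`ν¹ = u_x − u²` and `ν² = u_t − 2u(u_xx − 2uu_x) − 2u²(u_x − u²)` satisfy the
factorized system `ν¹_t = ν²_x + 2ν¹ν¹_x` and `ν² = ν¹_xx + 2(ν¹)²`. -/
theorem mkdv_factorization (u : ℝ → ℝ → ℝ)
    (hu : ContDiff ℝ (⊤ : ℕ∞) (Function.uncurry u))
    (hmkdv : ∀ x t, pt u x t = px (px (px u)) x t - 6 * (u x t) ^ 2 * px u x t) :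
    ∀ x t,
      pt (fun x t => px u x t - (u x t) ^ 2) x t
          = px (fun x t =>
                pt u x t - 2 * u x t * (px (px u) x t - 2 * u x t * px u x t)
                  - 2 * (u x t) ^ 2 * (px u x t - (u x t) ^ 2)) x t
            + 2 * (px u x t - (u x t) ^ 2)
              * px (fun x t => px u x t - (u x t) ^ 2) x t
      ∧ pt u x t - 2 * u x t * (px (px u) x t - 2 * u x t * px u x t)
            - 2 * (u x t) ^ 2 * (px u x t - (u x t) ^ 2)
          = px (px (fun x t => px u x t - (u x t) ^ 2)) x t
            + 2 * (px u x t - (u x t) ^ 2) ^ 2 := by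
  have hu1 : ContDiff ℝ (⊤ : ℕ∞) (Function.uncurry (px u)) := contDiff_px hu
  have hu2 : ContDiff ℝ (⊤ : ℕ∞) (Function.uncurry (px (px u))) := contDiff_px hu1
  have hu3 : ContDiff ℝ (⊤ : ℕ∞) (Function.uncurry (px (px (px u)))) := contDiff_px hu2
  -- derivative of ν¹ in x, at every point
  have hpxν : ∀ y s, px (fun a b => px u a b - (u a b) ^ 2) y s
      = px (px u) y s - 2 * u y s * px u y s := by
    intro y s
    have h := ((hasDerivX hu1 y s).sub ((hasDerivX hu y s).pow 2)).deriv
    have h0 : px (fun a b => px u a b - (u a b) ^ 2) y s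
        = deriv (fun a => px u a s - (u a s) ^ 2) y := rfl
    rw [h0]
    refine h.trans ?_
    push_cast
    ring
  intro x t
  have h0 := hasDerivX hu x t
  have h1 := hasDerivX hu1 x t
  have h2 := hasDerivX hu2 x t
  have h3 := hasDerivX hu3 x t
  -- derivative of ν¹ in t
  have hν1t : pt (fun a b => px u a b - (u a b) ^ 2) x t
      = pt (px u) x t - 2 * u x t * pt u x t := by
    have h := ((hasDerivT hu1 x t).sub ((hasDerivT hu x t).pow 2)).deriv
    have h0' : pt (fun a b => px u a b - (u a b) ^ 2) x t
        = deriv (fun s => px u x s - (u x s) ^ 2) t := rfl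
    rw [h0']
    refine h.trans ?_
    push_cast
    ring
  -- pt u as a function
  have hptu : pt u = fun a b => px (px (px u)) a b - 6 * (u a b) ^ 2 * px u a b :=
    funext fun a => funext fun b => hmkdv a b
  -- Clairaut: pt (px u) in terms of x-derivatives
  have hptpx : pt (px u) x t
      = px (px (px (px u))) x t
        - (12 * u x t * (px u x t) ^ 2 + 6 * (u x t) ^ 2 * px (px u) x t) := by
    rw [clairaut hu x t, hptu]
    have h := (h3.sub ((((h0.pow 2).const_mul 6).mul h1))).deriv
    have h0' : px (fun a b => px (px (px u)) a b - 6 * (u a b) ^ 2 * px u a b) x t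
        = deriv (fun a => px (px (px u)) a t - 6 * (u a t) ^ 2 * px u a t) x := rfl
    rw [h0']
    refine h.trans ?_
    simp only [Pi.pow_apply, Pi.sub_apply, Pi.mul_apply]
    push_cast
    ring
  -- x-derivative of ν²
  have hν2x : px (fun a b =>
        pt u a b - 2 * u a b * (px (px u) a b - 2 * u a b * px u a b)
          - 2 * (u a b) ^ 2 * (px u a b - (u a b) ^ 2)) x t
      = px (px (px (px u))) x t
        - (12 * u x t * (px u x t) ^ 2 + 6 * (u x t) ^ 2 * px (px u) x t)
        - (2 * px u x t * (px (px u) x t - 2 * u x t * px u x t)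
            + 2 * u x t * (px (px (px u)) x t
              - (2 * (px u x t) ^ 2 + 2 * u x t * px (px u) x t)))
        - (4 * u x t * px u x t * (px u x t - (u x t) ^ 2)
            + 2 * (u x t) ^ 2 * (px (px u) x t - 2 * u x t * px u x t)) := by
    have hrw : (fun a b =>
        pt u a b - 2 * u a b * (px (px u) a b - 2 * u a b * px u a b)
          - 2 * (u a b) ^ 2 * (px u a b - (u a b) ^ 2))
        = fun a b =>
        (px (px (px u)) a b - 6 * (u a b) ^ 2 * px u a b)
          - 2 * u a b * (px (px u) a b - 2 * u a b * px u a b)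
          - 2 * (u a b) ^ 2 * (px u a b - (u a b) ^ 2) := by
      funext a b
      rw [hmkdv a b]
    rw [hrw]
    have H := (((h3.sub (((h0.pow 2).const_mul 6).mul h1)).sub
        ((h0.const_mul 2).mul (h2.sub ((h0.const_mul 2).mul h1)))).sub
        (((h0.pow 2).const_mul 2).mul (h1.sub (h0.pow 2)))).deriv
    have h0' : px (fun a b =>
        (px (px (px u)) a b - 6 * (u a b) ^ 2 * px u a b)
          - 2 * u a b * (px (px u) a b - 2 * u a b * px u a b)
          - 2 * (u a b) ^ 2 * (px u a b - (u a b) ^ 2)) x t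
        = deriv (fun a =>
        (px (px (px u)) a t - 6 * (u a t) ^ 2 * px u a t)
          - 2 * u a t * (px (px u) a t - 2 * u a t * px u a t)
          - 2 * (u a t) ^ 2 * (px u a t - (u a t) ^ 2)) x := rfl
    rw [h0']
    refine H.trans ?_
    simp only [Pi.pow_apply, Pi.sub_apply, Pi.mul_apply]
    push_cast
    ring
  -- second x-derivative of ν¹
  have hpxpxν : px (px (fun a b => px u a b - (u a b) ^ 2)) x t
      = px (px (px u)) x t - (2 * (px u x t) ^ 2 + 2 * u x t * px (px u) x t) := by
    have hrw : px (fun a b => px u a b - (u a b) ^ 2)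
        = fun a b => px (px u) a b - 2 * u a b * px u a b :=
      funext fun a => funext fun b => hpxν a b
    rw [hrw]
    have H := (h2.sub ((h0.const_mul 2).mul h1)).deriv
    have h0' : px (fun a b => px (px u) a b - 2 * u a b * px u a b) x t
        = deriv (fun a => px (px u) a t - 2 * u a t * px u a t) x := rfl
    rw [h0']
    refine H.trans ?_
    ring
  constructor
  · rw [hν1t, hν2x, hpxν x t, hptpx, hmkdv x t]
    ring
  · rw [hpxpxν, hmkdv x t]
    ring
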